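/- Let Γ = ∂K for a compact convex set K ⊆ ℝ² with nonempty interior, and assume every 6-element subset of Γ is in centrally symmetric convex position. Let a ∈ Γ be a smooth point of Γ (there is a unique supporting line ℓ of K at a), and let b, c, d ∈ Γ be such that abcd is a nondegenerate parallelogram (a + c = b + d) whose sides are not parallel to ℓ. Then the line through c parallel to ℓ is a supporting line of K. -/

import Mathlib

noncomputable section

abbrev Pt := EuclideanSpace ℝ (Fin 2)

/-- A set of points is in convex position if every point is an extreme point
of the convex hull of the set. -/
def InConvexPos (S : Set Pt) : Prop :=
  ∀ p ∈ S, p ∈ Set.extremePoints ℝ (convexHull ℝ S)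

/-- The reflection of the set `S` through the point `O`. -/
def reflSet (O : Pt) (S : Set Pt) : Set Pt := (fun x => (2 : ℝ) • O - x) '' S

/-- `O` is an admissible center for `S` if `S ∪ (2O - S)` is in convex position. -/
def AdmissibleCenter (O : Pt) (S : Set Pt) : Prop := InConvexPos (S ∪ reflSet O S)

/-- A set is in centrally symmetric convex position if it admits an admissible center. -/
def CSCPos (S : Set Pt) : Prop := ∃ O : Pt, AdmissibleCenter O S

/-- `u` is an outer supporting normal of `K` at the boundary point `p`. -/
def IsSupportNormalAt (K : Set Pt) (u p : Pt) : Prop :=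
  p ∈ K ∧ ∀ x ∈ K, (inner ℝ u x : ℝ) ≤ inner ℝ u p

-- ===== auxiliary development =====

set_option maxHeartbeats 1000000

local notation "⟪" x ", " y "⟫" => @inner ℝ _ _ x y

lemma inner_coords (x y : Pt) : ⟪x, y⟫ = x 0 * y 0 + x 1 * y 1 := by
  simp [PiLp.inner_apply, Fin.sum_univ_two, RCLike.inner_apply, mul_comm]

lemma pt_ext (x y : Pt) (h0 : x 0 = y 0) (h1 : x 1 = y 1) : x = y := by
  apply PiLp.ext; intro i; fin_cases i <;> assumption

def vperp (u : Pt) : Pt := (WithLp.equiv 2 (Fin 2 → ℝ)).symm ![-(u 1), u 0]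

lemma vperp0 (u : Pt) : vperp u 0 = -(u 1) := rfl
lemma vperp1 (u : Pt) : vperp u 1 = u 0 := rfl

lemma pt_coord_smul (r : ℝ) (x : Pt) (i : Fin 2) : (r • x) i = r * x i := rfl
lemma pt_coord_add (x y : Pt) (i : Fin 2) : (x + y) i = x i + y i := rfl
lemma pt_coord_sub (x y : Pt) (i : Fin 2) : (x - y) i = x i - y i := rfl
lemma pt_coord_zero (i : Fin 2) : (0 : Pt) i = 0 := rfl

lemma pt_nonzero_coords (u : Pt) (hu : u ≠ 0) : 0 < u 0 ^ 2 + u 1 ^ 2 := by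
  rcases eq_or_ne (u 0) 0 with h0 | h0
  · rcases eq_or_ne (u 1) 0 with h1 | h1
    · exact absurd (pt_ext u 0 (by simp [h0, pt_coord_zero]) (by simp [h1, pt_coord_zero])) hu
    · positivity
  · positivity

lemma inner_u_vperp (u : Pt) : ⟪u, vperp u⟫ = 0 := by
  rw [inner_coords, vperp0, vperp1]; ring

lemma vperp_ne_zero (u : Pt) (hu : u ≠ 0) : vperp u ≠ 0 := by
  intro h
  have h0 : vperp u 0 = 0 := by rw [h]; rfl
  have h1 : vperp u 1 = 0 := by rw [h]; rfl
  rw [vperp0] at h0; rw [vperp1] at h1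
  exact hu (pt_ext u 0 h1 (by simpa [pt_coord_zero] using neg_eq_zero.mp h0))

/-- if both coordinates in the (u, vperp u) frame vanish, the vector is zero -/
lemma basis_uv (u : Pt) (hu : u ≠ 0) (w : Pt) (h1 : ⟪u, w⟫ = 0) (h2 : ⟪vperp u, w⟫ = 0) :
    w = 0 := by
  rw [inner_coords] at h1 h2
  rw [vperp0, vperp1] at h2
  have hpos := pt_nonzero_coords u hu
  have e0 : (u 0 ^ 2 + u 1 ^ 2) * w 0 = 0 := by linear_combination u 0 * h1 - u 1 * h2
  have e1 : (u 0 ^ 2 + u 1 ^ 2) * w 1 = 0 := by linear_combination u 1 * h1 + u 0 * h2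
  apply pt_ext <;> rw [pt_coord_zero]
  · exact (mul_eq_zero.mp e0).resolve_left (ne_of_gt hpos)
  · exact (mul_eq_zero.mp e1).resolve_left (ne_of_gt hpos)


def cross2 (x y : Pt) : ℝ := x 0 * y 1 - x 1 * y 0

lemma cross2_coords (x y : Pt) : cross2 x y = x 0 * y 1 - x 1 * y 0 := rfl

lemma extreme_diff {X : Set Pt} (hX : InConvexPos X) {x : Pt} (hx : x ∈ X) :
    x ∉ convexHull ℝ (X \ {x}) := by
  intro hmem
  have hext := hX x hx
  have hextS : x ∈ Set.extremePoints ℝ (convexHull ℝ (X \ {x})) := by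
    refine ⟨hmem, fun x1 h1 x2 h2 hseg => ?_⟩
    exact hext.2 (convexHull_mono Set.diff_subset h1)
      (convexHull_mono Set.diff_subset h2) hseg
  have := extremePoints_convexHull_subset hextS
  exact this.2 rfl

lemma triangle_mem (w1 w2 w3 : Pt) (k1 k2 k3 : ℝ) (h1 : 0 ≤ k1) (h2 : 0 ≤ k2)
    (h3 : 0 ≤ k3) (hs : k1 + k2 + k3 = 1) :
    k1 • w1 + k2 • w2 + k3 • w3 ∈ convexHull ℝ ({w1, w2, w3} : Set Pt) := by
  have hmem : ∀ i : Fin 3, (![w1, w2, w3]) i ∈ ({w1, w2, w3} : Set Pt) := by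
    intro i; fin_cases i <;> simp
  have H := Finset.centerMass_mem_convexHull (t := (Finset.univ : Finset (Fin 3)))
    (w := ![k1, k2, k3]) (z := ![w1, w2, w3]) (s := ({w1, w2, w3} : Set Pt))
    (by intro i _; fin_cases i <;> simpa) (by simp [Fin.sum_univ_three, hs])
    (fun i _ => hmem i)
  rw [Finset.centerMass, Fin.sum_univ_three, Fin.sum_univ_three] at H
  simpa [hs] using H

/-- barycentric membership helper -/
lemma mem_tri (x w1 w2 w3 : Pt) (k1 k2 k3 : ℝ) (hN : k1 + k2 + k3 ≠ 0)
    (h1 : 0 ≤ k1 * (k1 + k2 + k3)) (h2 : 0 ≤ k2 * (k1 + k2 + k3))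
    (h3 : 0 ≤ k3 * (k1 + k2 + k3))
    (hid : k1 • (w1 - x) + k2 • (w2 - x) + k3 • (w3 - x) = 0) :
    x ∈ convexHull ℝ ({w1, w2, w3} : Set Pt) := by
  set N := k1 + k2 + k3 with hNdef
  have hN2 : 0 < N * N := by
    rcases lt_or_gt_of_ne hN with h | h
    · exact mul_pos_of_neg_of_neg h h
    · exact mul_pos h h
  have g1 : 0 ≤ k1 / N := by
    have : k1 / N = k1 * N / (N * N) := (mul_div_mul_right _ _ hN).symm
    rw [this]; exact div_nonneg h1 (le_of_lt hN2)
  have g2 : 0 ≤ k2 / N := by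
    have : k2 / N = k2 * N / (N * N) := (mul_div_mul_right _ _ hN).symm
    rw [this]; exact div_nonneg h2 (le_of_lt hN2)
  have g3 : 0 ≤ k3 / N := by
    have : k3 / N = k3 * N / (N * N) := (mul_div_mul_right _ _ hN).symm
    rw [this]; exact div_nonneg h3 (le_of_lt hN2)
  have gs : k1 / N + k2 / N + k3 / N = 1 := by field_simp; exact hNdef.symm
  have hx : x = (k1 / N) • w1 + (k2 / N) • w2 + (k3 / N) • w3 := by
    have hv : k1 • w1 + k2 • w2 + k3 • w3 = N • x := by
      have := hid
      rw [smul_sub, smul_sub, smul_sub] at this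
      rw [hNdef, add_smul, add_smul]
      abel_nf
      abel_nf at this
      linear_combination (norm := abel) this
    calc x = (N⁻¹ * N) • x := by rw [inv_mul_cancel₀ hN, one_smul]
    _ = N⁻¹ • (k1 • w1 + k2 • w2 + k3 • w3) := by rw [mul_smul, hv]
    _ = (k1 / N) • w1 + (k2 / N) • w2 + (k3 / N) • w3 := by
        rw [smul_add, smul_add, ← mul_smul, ← mul_smul, ← mul_smul]
        simp [div_eq_mul_inv, mul_comm]
  rw [hx]
  exact triangle_mem _ _ _ _ _ _ g1 g2 g3 gs

/-- if the cross product of b-a and c-a vanishes, the three points are collinear -/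
lemma collinear_of_cross (a b c : Pt) (h : cross2 (b - a) (c - a) = 0) :
    Collinear ℝ ({a, b, c} : Set Pt) := by
  unfold cross2 at h
  rw [pt_coord_sub, pt_coord_sub, pt_coord_sub, pt_coord_sub] at h
  rw [collinear_iff_of_mem (Set.mem_insert a {b, c})]
  rcases eq_or_ne (b - a) 0 with hb | hb
  · refine ⟨c - a, fun p hp => ?_⟩
    have hba : b = a := by rwa [sub_eq_zero] at hb
    rcases hp with rfl | rfl | rfl
    · exact ⟨0, by simp⟩
    · exact ⟨0, by simp [hba]⟩
    · exact ⟨1, by simp⟩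
  · refine ⟨b - a, fun p hp => ?_⟩
    have key : ∀ r : ℝ, p 0 = r * (b 0 - a 0) + a 0 → p 1 = r * (b 1 - a 1) + a 1 →
        p = r • (b - a) +ᵥ a := by
      intro r e0 e1
      apply pt_ext
      · rw [vadd_eq_add, pt_coord_add, pt_coord_smul, pt_coord_sub]; exact e0
      · rw [vadd_eq_add, pt_coord_add, pt_coord_smul, pt_coord_sub]; exact e1
    rcases hp with rfl | rfl | rfl
    · exact ⟨0, key 0 (by ring) (by ring)⟩
    · exact ⟨1, key 1 (by ring) (by ring)⟩
    · rcases eq_or_ne (b 0 - a 0) 0 with h0 | h0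
      · have h1 : b 1 - a 1 ≠ 0 := by
          intro h1
          apply hb
          apply pt_ext <;> rw [pt_coord_sub, pt_coord_zero]
          · linarith
          · linarith
        have hc0 : p 0 - a 0 = 0 := by
          rcases mul_eq_zero.mp (show (b 1 - a 1) * (p 0 - a 0) = 0 by linear_combination -h + (p 1 - a 1) * h0) with h' | h'
          · exact absurd h' h1
          · exact h'
        refine ⟨(p 1 - a 1) / (b 1 - a 1), key _ ?_ ?_⟩
        · rw [h0]; linarith
        · field_simp; ring
      · refine ⟨(p 0 - a 0) / (b 0 - a 0), key _ ?_ ?_⟩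
        · field_simp; ring
        · field_simp
          linear_combination h

lemma force_vertex {X : Set Pt} (hX : InConvexPos X) (v w2 w3 t : Pt) (ht : t ≠ 0)
    (hv : v ∈ X) (hw1 : v + t ∈ X) (hw2 : w2 ∈ X) (hw3 : w3 ∈ X)
    (h2 : w2 ≠ v) (h3 : w3 ≠ v) (α β : ℝ) (hα : 0 ≤ α) (hβ : 0 ≤ β)
    (hdec : t = α • (v - w2) + β • (v - w3)) : False := by
  have h1 : v + t ≠ v := by
    intro h; exact ht (by simpa using h)
  have hmem : v ∈ convexHull ℝ ({v + t, w2, w3} : Set Pt) := by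
    apply mem_tri v (v + t) w2 w3 1 α β
    · positivity
    · positivity
    · positivity
    · positivity
    · rw [show v + t - v = t from by abel, hdec]
      module
  have hsub : ({v + t, w2, w3} : Set Pt) ⊆ X \ {v} := by
    intro x hx
    rcases hx with rfl | rfl | rfl
    · exact ⟨hw1, h1⟩
    · exact ⟨hw2, h2⟩
    · exact ⟨hw3, h3⟩
  exact extreme_diff hX hv (convexHull_mono hsub hmem)

lemma center_eq {Y : Finset Pt} {O a b c d : Pt}
    (hX : InConvexPos (↑Y ∪ reflSet O ↑Y))
    (haY : a ∈ Y) (hbY : b ∈ Y) (hcY : c ∈ Y) (hdY : d ∈ Y)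
    (hpar : a + c = b + d) (hcr : cross2 (b - a) (c - a) ≠ 0)
    (hab : a ≠ b) (hac : a ≠ c) (hbc : b ≠ c)
    (hda : d ≠ a) (hdb : d ≠ b) (hdc : d ≠ c) :
    (2 : ℝ) • O = a + c := by
  by_contra hne
  have hdd : d = a + c - b := by
    rw [eq_sub_iff_add_eq, add_comm]; exact hpar.symm
  subst hdd
  set t : Pt := (2 : ℝ) • O - (a + c) with htdef
  have ht : t ≠ 0 := sub_ne_zero.mpr hne
  set e1 : Pt := b - a with he1
  set e2 : Pt := c - b with he2
  have hX2 : cross2 e1 e2 ≠ 0 := by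
    have : cross2 e1 e2 = cross2 (b - a) (c - a) := by
      simp only [cross2, he1, he2, pt_coord_sub]; ring
    rw [this]; exact hcr
  set α : ℝ := (t 0 * e2 1 - t 1 * e2 0) / cross2 e1 e2 with hαdef
  set β : ℝ := (e1 0 * t 1 - e1 1 * t 0) / cross2 e1 e2 with hβdef
  have hdec : t = α • e1 + β • e2 := by
    apply pt_ext
    · rw [pt_coord_add, pt_coord_smul, pt_coord_smul, hαdef, hβdef]
      unfold cross2 at hX2 ⊢
      rw [div_mul_eq_mul_div, div_mul_eq_mul_div, ← add_div, eq_div_iff hX2]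
      ring
    · rw [pt_coord_add, pt_coord_smul, pt_coord_smul, hαdef, hβdef]
      unfold cross2 at hX2 ⊢
      rw [div_mul_eq_mul_div, div_mul_eq_mul_div, ← add_div, eq_div_iff hX2]
      ring
  have memY : ∀ x ∈ Y, x ∈ (↑Y ∪ reflSet O ↑Y : Set Pt) :=
    fun x hx => Set.mem_union_left _ hx
  have memR : ∀ x ∈ Y, ∀ z : Pt, z = (2:ℝ) • O - x → z ∈ (↑Y ∪ reflSet O ↑Y : Set Pt) :=
    fun x hx z hz => Set.mem_union_right _ ⟨x, hx, hz.symm⟩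
  rcases le_or_gt 0 α with hα | hα <;> rcases le_or_gt 0 β with hβ | hβ
  · -- v = c, w2 = d, w3 = b
    refine force_vertex hX c (a + c - b) b t ht (memY c hcY) ?_ (memY _ hdY) (memY b hbY)
      hdc hbc α β hα hβ ?_
    · exact memR a haY _ (by rw [htdef]; module)
    · rw [hdec]; module
  · -- v = b, w2 = a, w3 = c
    refine force_vertex hX b a c t ht (memY b hbY) ?_ (memY a haY) (memY c hcY)
      hab hbc.symm α (-β) hα (by linarith) ?_
    · exact memR (a + c - b) hdY _ (by rw [htdef]; module)
    · rw [hdec]; module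
  · -- v = d, w2 = c, w3 = a
    refine force_vertex hX (a + c - b) c a t ht (memY _ hdY) ?_ (memY c hcY) (memY a haY)
      hdc.symm hda.symm (-α) β (by linarith) hβ ?_
    · exact memR b hbY _ (by rw [htdef]; module)
    · rw [hdec]; module
  · -- v = a, w2 = b, w3 = d
    refine force_vertex hX a b (a + c - b) t ht (memY a haY) ?_ (memY b hbY) (memY _ hdY)
      hab.symm hda (-α) (-β) (by linarith) (by linarith) ?_
    · exact memR c hcY _ (by rw [htdef]; module)
    · rw [hdec]; module

/-- Near a smooth boundary point, there are boundary points on either side with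
arbitrarily small slope. -/
lemma smooth_dir {K : Set Pt} (hK : IsCompact K) (hconv : Convex ℝ K)
    {u a : Pt} (haK : a ∈ K) (hsupa : ∀ x ∈ K, ⟪u, x⟫ ≤ ⟪u, a⟫)
    (hsmooth : ∀ w : Pt, w ≠ 0 → (∀ x ∈ K, ⟪w, x⟫ ≤ ⟪w, a⟫) → ∃ t : ℝ, w = t • u)
    (v : Pt) (hv0 : v ≠ 0) (huv : ⟪u, v⟫ = 0) (hu : u ≠ 0)
    (ε δ : ℝ) (hε : 0 < ε) (hδ : 0 < δ) :
    ∃ p ∈ frontier K, 0 < ⟪v, p - a⟫ ∧ ⟪v, p - a⟫ ≤ δ ∧ -(ε * ⟪v, p - a⟫) < ⟪u, p - a⟫ := by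
  -- step 1: there is a point of K with positive v-coordinate and controlled slope
  have step1 : ∃ x ∈ K, 0 < ⟪v, x - a⟫ ∧ -(ε * ⟪v, x - a⟫) < ⟪u, x - a⟫ := by
    by_contra hcon
    push_neg at hcon
    have hw : ∀ x ∈ K, ⟪u + ε • v, x⟫ ≤ ⟪u + ε • v, a⟫ := by
      intro x hxK
      have hfx : ⟪u, x - a⟫ ≤ 0 := by
        rw [inner_sub_right]; linarith [hsupa x hxK]
      have key : ⟪u, x - a⟫ + ε * ⟪v, x - a⟫ ≤ 0 := by
        rcases le_or_gt (⟪v, x - a⟫) 0 with hg | hg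
        · nlinarith
        · linarith [hcon x hxK hg]
      have expand : ⟪u + ε • v, x⟫ - ⟪u + ε • v, a⟫ = ⟪u, x - a⟫ + ε * ⟪v, x - a⟫ := by
        rw [inner_add_left, inner_add_left, inner_sub_right, inner_sub_right,
          real_inner_smul_left, real_inner_smul_left]
        ring
      linarith [key, expand.le, expand.ge]
    have hwne : u + ε • v ≠ 0 := by
      intro h
      have : ⟪u + ε • v, v⟫ = 0 := by rw [h, inner_zero_left]
      rw [inner_add_left, real_inner_smul_left, huv] at this
      have hvv : 0 < ⟪v, v⟫ := by rw [real_inner_self_eq_norm_sq]; exact pow_pos (norm_pos_iff.mpr hv0) 2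
      nlinarith
    obtain ⟨t, htw⟩ := hsmooth _ hwne hw
    have : ⟪u + ε • v, v⟫ = t * ⟪u, v⟫ := by rw [htw, real_inner_smul_left]
    rw [inner_add_left, real_inner_smul_left, huv] at this
    have hvv : 0 < ⟪v, v⟫ := by rw [real_inner_self_eq_norm_sq]; exact pow_pos (norm_pos_iff.mpr hv0) 2
    nlinarith
  obtain ⟨x, hxK, hxg, hxslope⟩ := step1
  -- step 2: rescale towards a so that the v-coordinate is at most δ
  set s : ℝ := min 1 (δ / ⟪v, x - a⟫) with hsdef
  have hs0 : 0 < s := lt_min one_pos (div_pos hδ hxg)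
  have hs1 : s ≤ 1 := min_le_left _ _
  set x' : Pt := a + s • (x - a) with hx'def
  have hx'K : x' ∈ K := by
    have : x' = (1 - s) • a + s • x := by rw [hx'def]; module
    rw [this]
    exact hconv haK hxK (by linarith) (le_of_lt hs0) (by ring)
  have hx'g : ⟪v, x' - a⟫ = s * ⟪v, x - a⟫ := by
    rw [hx'def, add_sub_cancel_left, real_inner_smul_right]
  have hx'gpos : 0 < ⟪v, x' - a⟫ := by rw [hx'g]; positivity
  have hx'gle : ⟪v, x' - a⟫ ≤ δ := by
    rw [hx'g]
    calc s * ⟪v, x - a⟫ ≤ (δ / ⟪v, x - a⟫) * ⟪v, x - a⟫ := by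
          apply mul_le_mul_of_nonneg_right (min_le_right _ _) (le_of_lt hxg)
    _ = δ := div_mul_cancel₀ δ (ne_of_gt hxg)
  have hx'slope : -(ε * ⟪v, x' - a⟫) < ⟪u, x' - a⟫ := by
    have hu' : ⟪u, x' - a⟫ = s * ⟪u, x - a⟫ := by
      rw [hx'def, add_sub_cancel_left, real_inner_smul_right]
    rw [hu', hx'g]
    nlinarith
  -- step 3: push up to the frontier, keeping the v-coordinate fixed
  set T : Set Pt := K ∩ {r | ⟪v, r⟫ = ⟪v, x'⟫} with hTdef
  have hTcompact : IsCompact T := hK.inter_right (isClosed_eq (Continuous.inner continuous_const continuous_id) continuous_const)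
  have hTne : T.Nonempty := ⟨x', hx'K, rfl⟩
  have hcont : Continuous fun r : Pt => ⟪u, r⟫ :=
    Continuous.inner continuous_const continuous_id
  obtain ⟨p, hpT, hpmax⟩ := hTcompact.exists_isMaxOn hTne hcont.continuousOn
  refine ⟨p, ?_, ?_, ?_, ?_⟩
  · -- p is on the frontier
    rw [hK.isClosed.frontier_eq]
    refine ⟨hpT.1, fun hpint => ?_⟩
    obtain ⟨ρ, hρ0, hball⟩ := Metric.isOpen_iff.mp isOpen_interior p hpint
    have hun : 0 < ‖u‖ := norm_pos_iff.mpr hu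
    set p' : Pt := p + (ρ / (2 * ‖u‖)) • u with hp'def
    have hp'K : p' ∈ K := by
      apply interior_subset
      apply hball
      rw [Metric.mem_ball, dist_eq_norm, hp'def, add_sub_cancel_left, norm_smul]
      rw [Real.norm_eq_abs, abs_of_pos (by positivity)]
      have he : ρ / (2 * ‖u‖) * ‖u‖ = ρ / 2 := by field_simp
      rw [he]
      linarith
    have hp'T : p' ∈ T := by
      refine ⟨hp'K, ?_⟩
      show ⟪v, p'⟫ = ⟪v, x'⟫
      rw [hp'def, inner_add_right, real_inner_smul_right, real_inner_comm u v, huv,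
        mul_zero, add_zero]
      exact hpT.2
    have := hpmax hp'T
    simp only [Set.mem_setOf_eq, id_eq] at this
    have hcontra : ⟪u, p'⟫ = ⟪u, p⟫ + (ρ / (2 * ‖u‖)) * ‖u‖ ^ 2 := by
      rw [hp'def, inner_add_right, real_inner_smul_right, real_inner_self_eq_norm_sq]
    have hpos : 0 < ρ / (2 * ‖u‖) * ‖u‖ ^ 2 := by positivity
    linarith
  · have : ⟪v, p⟫ = ⟪v, x'⟫ := hpT.2
    rw [inner_sub_right, this, ← inner_sub_right]
    exact hx'gpos
  · have : ⟪v, p⟫ = ⟪v, x'⟫ := hpT.2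
    rw [inner_sub_right, this, ← inner_sub_right]
    exact hx'gle
  · have hpv : ⟪v, p - a⟫ = ⟪v, x' - a⟫ := by
      rw [inner_sub_right, inner_sub_right, hpT.2]
    have hpu : ⟪u, x' - a⟫ ≤ ⟪u, p - a⟫ := by
      have := hpmax ⟨hx'K, rfl⟩
      simp only [Set.mem_setOf_eq, id_eq] at this
      rw [inner_sub_right, inner_sub_right]
      linarith [this]
    rw [hpv]
    linarith

lemma card_six [DecidableEq Pt] {x1 x2 x3 x4 x5 x6 : Pt}
    (h12 : x1 ≠ x2) (h13 : x1 ≠ x3) (h14 : x1 ≠ x4) (h15 : x1 ≠ x5) (h16 : x1 ≠ x6)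
    (h23 : x2 ≠ x3) (h24 : x2 ≠ x4) (h25 : x2 ≠ x5) (h26 : x2 ≠ x6)
    (h34 : x3 ≠ x4) (h35 : x3 ≠ x5) (h36 : x3 ≠ x6)
    (h45 : x4 ≠ x5) (h46 : x4 ≠ x6) (h56 : x5 ≠ x6) :
    ({x1, x2, x3, x4, x5, x6} : Finset Pt).card = 6 := by
  rw [Finset.card_insert_of_notMem (by simp [h12, h13, h14, h15, h16]),
    Finset.card_insert_of_notMem (by simp [h23, h24, h25, h26]),
    Finset.card_insert_of_notMem (by simp [h34, h35, h36]),
    Finset.card_insert_of_notMem (by simp [h45, h46]),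
    Finset.card_insert_of_notMem (by simp [h56]),
    Finset.card_singleton]

lemma endgame (K : Set Pt) (hK : IsCompact K) (hconv : Convex ℝ K)
    (hcsc : ∀ Y : Finset Pt, (↑Y : Set Pt) ⊆ frontier K → Y.card = 6 → CSCPos ↑Y)
    (u a b c d qm : Pt) (hu : u ≠ 0)
    (ha : a ∈ frontier K) (hb : b ∈ frontier K) (hc : c ∈ frontier K)
    (hd : d ∈ frontier K) (hqmG : qm ∈ frontier K)
    (haK : a ∈ K)
    (hsupa : ∀ x ∈ K, ⟪u, x⟫ ≤ ⟪u, a⟫)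
    (hsmooth : ∀ w : Pt, w ≠ 0 → (∀ x ∈ K, ⟪w, x⟫ ≤ ⟪w, a⟫) → ∃ t : ℝ, w = t • u)
    (hpar : a + c = b + d) (hcr : cross2 (b - a) (c - a) ≠ 0)
    (hab : a ≠ b) (hac : a ≠ c) (hbc : b ≠ c)
    (hda : d ≠ a) (hdb : d ≠ b) (hdc : d ≠ c)
    (hfb : ⟪u, b⟫ < ⟪u, a⟫) (hfc : ⟪u, c⟫ < ⟪u, a⟫) (hfd : ⟪u, d⟫ < ⟪u, a⟫)
    (hqmf : ⟪u, qm⟫ < ⟪u, c⟫) : False := by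
  classical
  set vp : Pt := vperp u with hvp
  -- choose the point `qb` below the level of `c`
  obtain ⟨qb, hqbG, hqbf, hqbcase⟩ :
      ∃ qb, qb ∈ frontier K ∧ ⟪u, qb⟫ < ⟪u, c⟫ ∧
        (qb = b ∨ qb = d ∨ (qb = qm ∧ ⟪u, c⟫ ≤ ⟪u, b⟫ ∧ ⟪u, c⟫ ≤ ⟪u, d⟫)) := by
    rcases lt_or_ge (⟪u, b⟫) (⟪u, c⟫) with h1 | h1
    · exact ⟨b, hb, h1, Or.inl rfl⟩
    rcases lt_or_ge (⟪u, d⟫) (⟪u, c⟫) with h2 | h2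
    · exact ⟨d, hd, h2, Or.inr (Or.inl rfl)⟩
    · exact ⟨qm, hqmG, hqmf, Or.inr (Or.inr ⟨rfl, h1, h2⟩)⟩
  -- coordinates of the fixed points relative to c
  set Af : ℝ := ⟪u, a - c⟫ with hAfdef
  set Ag : ℝ := ⟪vp, a - c⟫ with hAgdef
  set Qf : ℝ := ⟪u, qb - c⟫ with hQfdef
  set Qg : ℝ := ⟪vp, qb - c⟫ with hQgdef
  have hAf : 0 < Af := by rw [hAfdef, inner_sub_right]; linarith
  have hQf : Qf < 0 := by rw [hQfdef, inner_sub_right]; linarith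
  set D : ℝ := Af * Qg - Ag * Qf with hDdef
  set σ : ℝ := if 0 ≤ D then 1 else -1 with hσdef
  have hσcases : σ = 1 ∨ σ = -1 := by
    rw [hσdef]; split_ifs <;> simp
  have hσ2 : σ * σ = 1 := by rcases hσcases with h | h <;> rw [h] <;> norm_num
  have hσne : σ ≠ 0 := by rcases hσcases with h | h <;> rw [h] <;> norm_num
  have hDσ : 0 ≤ D * σ := by
    rw [hσdef]; split_ifs with h
    · simpa using h
    · push_neg at h; nlinarith
  -- the slope bound
  set ε₀ : ℝ := min (Af / (|Ag| + 1)) (-Qf / (|Qg| + 1)) / 2 with hε₀def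
  have hε₀ : 0 < ε₀ := by
    apply div_pos _ two_pos
    apply lt_min
    · positivity
    · apply div_pos (by linarith) (by positivity)
  have hAg1 : (0:ℝ) < |Ag| + 1 := by positivity
  have hQg1 : (0:ℝ) < |Qg| + 1 := by positivity
  have hepsA : ε₀ * (|Ag| + 1) ≤ Af / 2 := by
    have h1 : ε₀ ≤ Af / (|Ag| + 1) / 2 := by
      rw [hε₀def]; gcongr; exact min_le_left _ _
    calc ε₀ * (|Ag| + 1) ≤ Af / (|Ag| + 1) / 2 * (|Ag| + 1) :=
          mul_le_mul_of_nonneg_right h1 hAg1.le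
    _ = Af / 2 := by field_simp
  have hepsQ : ε₀ * (|Qg| + 1) ≤ -Qf / 2 := by
    have h1 : ε₀ ≤ -Qf / (|Qg| + 1) / 2 := by
      rw [hε₀def]; gcongr; exact min_le_right _ _
    calc ε₀ * (|Qg| + 1) ≤ -Qf / (|Qg| + 1) / 2 * (|Qg| + 1) :=
          mul_le_mul_of_nonneg_right h1 hQg1.le
    _ = -Qf / 2 := by field_simp
  -- the height threshold
  set M : ℝ := max (max (⟪u, b⟫) (⟪u, c⟫)) (max (⟪u, d⟫) (⟪u, qm⟫)) with hMdef
  have hbM : ⟪u, b⟫ ≤ M := le_max_of_le_left (le_max_left _ _)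
  have hcM : ⟪u, c⟫ ≤ M := le_max_of_le_left (le_max_right _ _)
  have hdM : ⟪u, d⟫ ≤ M := le_max_of_le_right (le_max_left _ _)
  have hqmM : ⟪u, qm⟫ ≤ M := le_max_of_le_right (le_max_right _ _)
  have hMa : M < ⟪u, a⟫ := by
    rw [hMdef]
    exact max_lt (max_lt hfb hfc) (max_lt hfd (by linarith))
  set δ₀ : ℝ := min 1 ((⟪u, a⟫ - M) / (2 * (ε₀ + 1))) with hδ₀def
  have hδ₀ : 0 < δ₀ := lt_min one_pos (div_pos (by linarith) (by positivity))
  have hδ₀M : ε₀ * δ₀ < ⟪u, a⟫ - M := by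
    have h1 : δ₀ ≤ (⟪u, a⟫ - M) / (2 * (ε₀ + 1)) := min_le_right _ _
    have h2 : ε₀ * δ₀ ≤ ε₀ * ((⟪u, a⟫ - M) / (2 * (ε₀ + 1))) :=
      mul_le_mul_of_nonneg_left h1 hε₀.le
    have h3 : ε₀ / (2 * (ε₀ + 1)) < 1 := by
      rw [div_lt_one (by positivity)]; linarith
    have h4 : ε₀ / (2 * (ε₀ + 1)) * (⟪u, a⟫ - M) < 1 * (⟪u, a⟫ - M) :=
      mul_lt_mul_of_pos_right h3 (by linarith)
    have e : ε₀ * ((⟪u, a⟫ - M) / (2 * (ε₀ + 1))) = ε₀ / (2 * (ε₀ + 1)) * (⟪u, a⟫ - M) := by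
      ring
    linarith [e ▸ h2]
  -- the smooth direction vector
  have hvpne : vp ≠ 0 := vperp_ne_zero u hu
  have hσvpne : σ • vp ≠ 0 := smul_ne_zero hσne hvpne
  have huσvp : ⟪u, σ • vp⟫ = 0 := by
    rw [real_inner_smul_right, inner_u_vperp]; ring
  -- get the two smooth points
  obtain ⟨p, hpG, hp1, hp2, hp3⟩ := smooth_dir hK hconv haK hsupa hsmooth (σ • vp)
    hσvpne huσvp hu ε₀ δ₀ hε₀ hδ₀
  set tt : ℝ := ⟪σ • vp, p - a⟫ with httdef
  obtain ⟨p₂, hp₂G, hq1, hq2, hq3⟩ := smooth_dir hK hconv haK hsupa hsmooth (σ • vp)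
    hσvpne huσvp hu ε₀ (tt / 2) hε₀ (by positivity)
  have hpK : p ∈ K := hK.isClosed.frontier_subset hpG
  have hp₂K : p₂ ∈ K := hK.isClosed.frontier_subset hp₂G
  -- heights of p and p₂ are above the threshold
  have hpM : M < ⟪u, p⟫ := by
    have h1 : -(ε₀ * tt) < ⟪u, p - a⟫ := hp3
    have h2 : ε₀ * tt ≤ ε₀ * δ₀ := mul_le_mul_of_nonneg_left hp2 hε₀.le
    rw [inner_sub_right] at h1
    linarith
  have hp₂M : M < ⟪u, p₂⟫ := by
    have h2 : ε₀ * ⟪σ • vp, p₂ - a⟫ ≤ ε₀ * δ₀ := by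
      apply mul_le_mul_of_nonneg_left _ hε₀.le
      linarith [hp2, hq2, hp1]
    have e : ⟪u, p₂ - a⟫ = ⟪u, p₂⟫ - ⟪u, a⟫ := inner_sub_right _ _ _
    linarith [hq3, h2, hδ₀M, e.le, e.ge]
  -- distinctness of p, p₂ from the other points
  have hpa : p ≠ a := by
    intro h
    have h' : (0:ℝ) < ⟪σ • vp, p - a⟫ := by rw [← httdef]; exact hp1
    rw [h, sub_self, inner_zero_right] at h'; linarith
  have hp₂a : p₂ ≠ a := by
    intro h; rw [h, sub_self, inner_zero_right] at hq1; linarith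
  have hp₂p : p₂ ≠ p := by
    intro h
    rw [h, ← httdef] at hq2
    linarith [hp1]
  have hpb : p ≠ b := fun h => absurd (h ▸ hpM) (not_lt.mpr hbM)
  have hpc : p ≠ c := fun h => absurd (h ▸ hpM) (not_lt.mpr hcM)
  have hpd : p ≠ d := fun h => absurd (h ▸ hpM) (not_lt.mpr hdM)
  have hpqm : p ≠ qm := fun h => absurd (h ▸ hpM) (not_lt.mpr hqmM)
  have hp₂b : p₂ ≠ b := fun h => absurd (h ▸ hp₂M) (not_lt.mpr hbM)
  have hp₂c : p₂ ≠ c := fun h => absurd (h ▸ hp₂M) (not_lt.mpr hcM)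
  have hp₂d : p₂ ≠ d := fun h => absurd (h ▸ hp₂M) (not_lt.mpr hdM)
  -- build the six-point set
  obtain ⟨Y, hYsub, hYcard, haY, hbY, hcY, hdY, hpY, hqbY⟩ :
      ∃ Y : Finset Pt, (↑Y : Set Pt) ⊆ frontier K ∧ Y.card = 6 ∧
        a ∈ Y ∧ b ∈ Y ∧ c ∈ Y ∧ d ∈ Y ∧ p ∈ Y ∧ qb ∈ Y := by
    have hsubset : ∀ w, w ∈ frontier K → (↑({a, b, c, d, p, w} : Finset Pt) : Set Pt) ⊆ frontier K := by
      intro w hw x hx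
      simp only [Finset.coe_insert, Finset.coe_singleton, Set.mem_insert_iff,
        Set.mem_singleton_iff] at hx
      rcases hx with rfl | rfl | rfl | rfl | rfl | rfl
      exacts [ha, hb, hc, hd, hpG, hw]
    rcases hqbcase with rfl | rfl | ⟨rfl, hcb, hcd⟩
    · exact ⟨{a, qb, c, d, p, p₂}, hsubset p₂ hp₂G,
        card_six hab hac (Ne.symm hda) hpa.symm hp₂a.symm hbc (Ne.symm hdb)
          hpb.symm hp₂b.symm (Ne.symm hdc) hpc.symm hp₂c.symm hpd.symm hp₂d.symm
          (Ne.symm hp₂p),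
        by simp, by simp, by simp, by simp, by simp, by simp⟩
    · exact ⟨{a, b, c, qb, p, p₂}, hsubset p₂ hp₂G,
        card_six hab hac (Ne.symm hda) hpa.symm hp₂a.symm hbc (Ne.symm hdb)
          hpb.symm hp₂b.symm (Ne.symm hdc) hpc.symm hp₂c.symm hpd.symm hp₂d.symm
          (Ne.symm hp₂p),
        by simp, by simp, by simp, by simp, by simp, by simp⟩
    · have hqmb : qb ≠ b := by intro h; rw [h] at hqbf; linarith
      have hqmc : qb ≠ c := by intro h; rw [h] at hqbf; linarith
      have hqmd : qb ≠ d := by intro h; rw [h] at hqbf; linarith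
      have hqma : qb ≠ a := by intro h; rw [h] at hqbf; linarith
      exact ⟨{a, b, c, d, p, qb}, hsubset qb hqbG,
        card_six hab hac (Ne.symm hda) hpa.symm hqma.symm hbc (Ne.symm hdb)
          hpb.symm hqmb.symm (Ne.symm hdc) hpc.symm hqmc.symm hpd.symm hqmd.symm
          hpqm,
        by simp, by simp, by simp, by simp, by simp, by simp⟩
  -- get the admissible center and pin it down
  obtain ⟨O, hO⟩ := hcsc Y hYsub hYcard
  have hX : InConvexPos (↑Y ∪ reflSet O ↑Y) := hO
  have hOm : (2 : ℝ) • O = a + c :=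
    center_eq hX haY hbY hcY hdY hpar hcr hab hac hbc hda hdb hdc
  -- the reflected point
  set pbar : Pt := a + c - p with hpbardef
  have hpbarX : pbar ∈ (↑Y ∪ reflSet O ↑Y : Set Pt) :=
    Set.mem_union_right _ ⟨p, hpY, by rw [hOm]⟩
  have hcX : c ∈ (↑Y ∪ reflSet O ↑Y : Set Pt) := Set.mem_union_left _ hcY
  have haX : a ∈ (↑Y ∪ reflSet O ↑Y : Set Pt) := Set.mem_union_left _ haY
  have hqbX : qb ∈ (↑Y ∪ reflSet O ↑Y : Set Pt) := Set.mem_union_left _ hqbY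
  -- coordinates of p relative to a
  set Pf : ℝ := ⟪u, a - p⟫ with hPfdef
  set Pg : ℝ := ⟪vp, a - p⟫ with hPgdef
  have httσ : ⟪vp, p - a⟫ = σ * tt := by
    rw [httdef, real_inner_smul_left]
    rcases hσcases with h | h <;> rw [h] <;> ring
  have hPgσ : Pg * σ = -tt := by
    have h : Pg = -(σ * tt) := by
      rw [hPgdef, ← httσ, ← inner_neg_right, neg_sub]
    rw [h]; rcases hσcases with h' | h' <;> rw [h'] <;> ring
  have htt0 : 0 < tt := hp1
  have httδ : tt ≤ δ₀ := hp2
  have hPf0 : 0 ≤ Pf := by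
    rw [hPfdef, inner_sub_right]
    linarith [hsupa p hpK]
  have hPfle : Pf ≤ ε₀ * tt := by
    have h := hp3
    rw [inner_sub_right] at h
    rw [hPfdef, inner_sub_right]
    linarith
  -- the barycentric coefficients
  set cQP : ℝ := Qf * Pg - Qg * Pf with hcQPdef
  set cPA : ℝ := Pf * Ag - Pg * Af with hcPAdef
  have hAgσ1 : Ag * σ ≤ |Ag| := by
    rcases hσcases with h | h <;> rw [h]
    · simpa using le_abs_self Ag
    · simpa using neg_le_abs Ag
  have hAgσ2 : -|Ag| ≤ Ag * σ := by
    rcases hσcases with h | h <;> rw [h]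
    · simpa using neg_abs_le Ag
    · simpa using le_abs_self Ag
  have hQgσ1 : Qg * σ ≤ |Qg| := by
    rcases hσcases with h | h <;> rw [h]
    · simpa using le_abs_self Qg
    · simpa using neg_le_abs Qg
  have hcPAσ : 0 < cPA * σ := by
    have expand : cPA * σ = Pf * (Ag * σ) + tt * Af := by
      rw [hcPAdef]; linear_combination (-Af) * hPgσ
    have h1 : -(ε₀ * tt * |Ag|) ≤ Pf * (Ag * σ) := by
      have e1 : Pf * (-|Ag|) ≤ Pf * (Ag * σ) := mul_le_mul_of_nonneg_left hAgσ2 hPf0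
      have e2 : Pf * |Ag| ≤ ε₀ * tt * |Ag| := mul_le_mul_of_nonneg_right hPfle (abs_nonneg _)
      have e3 : Pf * (-|Ag|) = -(Pf * |Ag|) := by ring
      linarith
    have h2 : ε₀ * |Ag| < Af := by
      have e : ε₀ * |Ag| = ε₀ * (|Ag| + 1) - ε₀ := by ring
      linarith
    have h5 : 0 < tt * (Af - ε₀ * |Ag|) := mul_pos htt0 (by linarith)
    have e2 : tt * (Af - ε₀ * |Ag|) = tt * Af - ε₀ * tt * |Ag| := by ring
    linarith
  have hcQPσ : 0 < cQP * σ := by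
    have expand : cQP * σ = tt * (-Qf) - (Qg * σ) * Pf := by
      rw [hcQPdef]; linear_combination Qf * hPgσ
    have h1 : (Qg * σ) * Pf ≤ ε₀ * tt * |Qg| := by
      have e1 : (Qg * σ) * Pf ≤ |Qg| * Pf := mul_le_mul_of_nonneg_right hQgσ1 hPf0
      have e2 : |Qg| * Pf ≤ |Qg| * (ε₀ * tt) := mul_le_mul_of_nonneg_left hPfle (abs_nonneg _)
      have e3 : |Qg| * (ε₀ * tt) = ε₀ * tt * |Qg| := by ring
      linarith
    have h2 : ε₀ * |Qg| < -Qf := by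
      have e : ε₀ * |Qg| = ε₀ * (|Qg| + 1) - ε₀ := by ring
      linarith
    have h5 : 0 < tt * (-Qf - ε₀ * |Qg|) := mul_pos htt0 (by linarith)
    have e2 : tt * (-Qf - ε₀ * |Qg|) = tt * (-Qf) - ε₀ * tt * |Qg| := by ring
    linarith
  have hNσ : 0 < (D + cQP + cPA) * σ := by
    have e : (D + cQP + cPA) * σ = D * σ + cQP * σ + cPA * σ := by ring
    rw [e]; linarith [hDσ, hcQPσ, hcPAσ]
  have hN : D + cQP + cPA ≠ 0 := by
    intro h; rw [h, zero_mul] at hNσ; linarith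
  have hk1 : 0 ≤ D * (D + cQP + cPA) := by
    have e : D * (D + cQP + cPA) = (D * σ) * ((D + cQP + cPA) * σ) := by
      linear_combination (-(D * (D + cQP + cPA))) * hσ2
    rw [e]; exact mul_nonneg hDσ hNσ.le
  have hk2 : 0 ≤ cQP * (D + cQP + cPA) := by
    have e : cQP * (D + cQP + cPA) = (cQP * σ) * ((D + cQP + cPA) * σ) := by
      linear_combination (-(cQP * (D + cQP + cPA))) * hσ2
    rw [e]; exact mul_nonneg hcQPσ.le hNσ.le
  have hk3 : 0 ≤ cPA * (D + cQP + cPA) := by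
    have e : cPA * (D + cQP + cPA) = (cPA * σ) * ((D + cQP + cPA) * σ) := by
      linear_combination (-(cPA * (D + cQP + cPA))) * hσ2
    rw [e]; exact mul_nonneg hcPAσ.le hNσ.le
  have hpc' : pbar - c = a - p := by rw [hpbardef]; abel
  have hid : D • (pbar - c) + cQP • (a - c) + cPA • (qb - c) = 0 := by
    rw [hpc']
    apply basis_uv u hu
    · rw [inner_add_right, inner_add_right, real_inner_smul_right,
        real_inner_smul_right, real_inner_smul_right, ← hPfdef, ← hAfdef, ← hQfdef]
      rw [hDdef, hcQPdef, hcPAdef]; ring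
    · rw [inner_add_right, inner_add_right, real_inner_smul_right,
        real_inner_smul_right, real_inner_smul_right, ← hPgdef, ← hAgdef, ← hQgdef]
      rw [hDdef, hcQPdef, hcPAdef]; ring
  have hsubtri : ({pbar, a, qb} : Set Pt) ⊆ (↑Y ∪ reflSet O ↑Y) \ {c} := by
    intro x hx
    rcases hx with rfl | rfl | rfl
    · refine ⟨hpbarX, ?_⟩
      intro h
      apply hpa
      have h2 : pbar - c = 0 := by
        rw [Set.mem_singleton_iff] at h; rw [h, sub_self]
      rw [hpc'] at h2
      have := sub_eq_zero.mp h2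
      exact this.symm
    · exact ⟨haX, fun h => hac (Set.mem_singleton_iff.mp h)⟩
    · refine ⟨hqbX, fun h => ?_⟩
      rw [Set.mem_singleton_iff] at h
      rw [h] at hqbf; linarith
  exact extreme_diff hX hcX
    (convexHull_mono hsubtri (mem_tri c pbar a qb D cQP cPA hN hk1 hk2 hk3 hid))

-- ===== main theorem =====

theorem stmt10 (K : Set Pt) (hK : IsCompact K) (hconv : Convex ℝ K)
    (hint : (interior K).Nonempty)
    (hcsc : ∀ Y : Finset Pt, (↑Y : Set Pt) ⊆ frontier K → Y.card = 6 → CSCPos ↑Y)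
    (a b c d : Pt) (ha : a ∈ frontier K) (hb : b ∈ frontier K)
    (hc : c ∈ frontier K) (hd : d ∈ frontier K)
    (u : Pt) (hu : u ≠ 0) (hsupa : IsSupportNormalAt K u a)
    -- `a` is a smooth point: every supporting normal at `a` is a multiple of `u`
    (hsmooth : ∀ w : Pt, w ≠ 0 → IsSupportNormalAt K w a → ∃ t : ℝ, w = t • u)
    (hpar : a + c = b + d) (hnd : ¬ Collinear ℝ {a, b, c})
    -- the sides of the parallelogram are not parallel to the tangent line at `a`
    (hside1 : (inner ℝ u (b - a) : ℝ) ≠ 0) (hside2 : (inner ℝ u (c - b) : ℝ) ≠ 0) :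
    (∀ x ∈ K, (inner ℝ u x : ℝ) ≤ inner ℝ u c) ∨ (∀ x ∈ K, (inner ℝ u c : ℝ) ≤ inner ℝ u x) := by
  classical
  by_contra hcon
  push_neg at hcon
  obtain ⟨⟨y, hyK, hy⟩, ⟨z, hzK, hz⟩⟩ := hcon
  have hKcl : IsClosed K := hK.isClosed
  have hfr : frontier K ⊆ K := hKcl.frontier_subset
  have haK : a ∈ K := hfr ha
  have hbK : b ∈ K := hfr hb
  have hcK : c ∈ K := hfr hc
  have hdK : d ∈ K := hfr hd
  have hsup : ∀ x ∈ K, ⟪u, x⟫ ≤ ⟪u, a⟫ := hsupa.2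
  have hsmooth' : ∀ w : Pt, w ≠ 0 → (∀ x ∈ K, ⟪w, x⟫ ≤ ⟪w, a⟫) → ∃ t : ℝ, w = t • u :=
    fun w hw hs => hsmooth w hw ⟨haK, hs⟩
  have hfc : ⟪u, c⟫ < ⟪u, a⟫ := lt_of_lt_of_le hy (hsup y hyK)
  have hfb : ⟪u, b⟫ < ⟪u, a⟫ := by
    refine lt_of_le_of_ne (hsup b hbK) ?_
    intro h; apply hside1; rw [inner_sub_right, h]; ring
  have hfd : ⟪u, d⟫ < ⟪u, a⟫ := by
    have hdd : d = a + c - b := by rw [eq_sub_iff_add_eq, add_comm]; exact hpar.symm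
    have hval : ⟪u, d⟫ = ⟪u, a⟫ + (⟪u, c⟫ - ⟪u, b⟫) := by
      rw [hdd, inner_sub_right, inner_add_right]; ring
    have hne2 : ⟪u, c⟫ - ⟪u, b⟫ ≠ 0 := by
      intro h; apply hside2; rw [inner_sub_right]; linarith
    refine lt_of_le_of_ne (hsup d hdK) ?_
    intro h; apply hne2; rw [hval] at h; linarith
  have hcr : cross2 (b - a) (c - a) ≠ 0 := fun h => hnd (collinear_of_cross a b c h)
  have hab : a ≠ b := by
    intro h; apply hcr; subst h
    rw [cross2_coords]; simp only [pt_coord_sub]; ring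
  have hac : a ≠ c := by
    intro h; apply hcr; subst h
    rw [cross2_coords]; simp only [pt_coord_sub]; ring
  have hbc : b ≠ c := by
    intro h; apply hcr; subst h
    rw [cross2_coords]; simp only [pt_coord_sub]; ring
  have hda : d ≠ a := by
    intro h
    apply hbc
    rw [h] at hpar
    have := hpar
    have h2 : a + c = a + b := by rw [this]; abel
    have := add_left_cancel h2
    exact this.symm ▸ rfl
  have hdb : d ≠ b := by
    intro h
    apply hcr
    rw [h] at hpar
    have hc2 : c = b + b - a := by rw [eq_sub_iff_add_eq, add_comm]; exact hpar
    subst hc2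
    rw [cross2_coords]; simp only [pt_coord_sub, pt_coord_add]; ring
  have hdc : d ≠ c := by
    intro h
    apply hab
    rw [h] at hpar
    have h2 : a + c = b + c := hpar
    have h3 : c + a = c + b := by rw [add_comm c a, add_comm c b]; exact h2
    exact add_left_cancel h3
  have hcont : Continuous fun r : Pt => ⟪u, r⟫ :=
    Continuous.inner continuous_const continuous_id
  obtain ⟨qm, hqmK, hqmmin⟩ := hK.exists_isMinOn ⟨a, haK⟩ hcont.continuousOn
  have hqmG : qm ∈ frontier K := by
    rw [hKcl.frontier_eq]
    refine ⟨hqmK, fun hintm => ?_⟩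
    obtain ⟨ρ, hρ0, hball⟩ := Metric.isOpen_iff.mp isOpen_interior qm hintm
    have hun : 0 < ‖u‖ := norm_pos_iff.mpr hu
    set q' : Pt := qm - (ρ / (2 * ‖u‖)) • u with hq'def
    have hq'K : q' ∈ K := by
      apply interior_subset; apply hball
      rw [Metric.mem_ball, dist_eq_norm]
      have e : q' - qm = -((ρ / (2 * ‖u‖)) • u) := by rw [hq'def]; abel
      rw [e, norm_neg, norm_smul, Real.norm_eq_abs, abs_of_pos (by positivity)]
      have he : ρ / (2 * ‖u‖) * ‖u‖ = ρ / 2 := by field_simp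
      rw [he]; linarith
    have hmin := hqmmin hq'K
    simp only [Set.mem_setOf_eq, id_eq] at hmin
    have hval : ⟪u, q'⟫ = ⟪u, qm⟫ - (ρ / (2 * ‖u‖)) * ‖u‖ ^ 2 := by
      rw [hq'def, inner_sub_right, real_inner_smul_right, real_inner_self_eq_norm_sq]
    have hpos : 0 < ρ / (2 * ‖u‖) * ‖u‖ ^ 2 := by positivity
    linarith [hmin]
  have hqmf : ⟪u, qm⟫ < ⟪u, c⟫ := lt_of_le_of_lt (hqmmin hzK) hz
  exact endgame K hK hconv hcsc u a b c d qm hu ha hb hc hd hqmG haK hsup hsmooth'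
    hpar hcr hab hac hbc hda hdb hdc hfb hfc hfd hqmf
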